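/- Let N, d ≥1, let F_N be the free group on generators g₁, …, g_N, let v₁, …, v_N ∈ ℂ^d, and let ν₁, …, ν_N ∈ ℝ. Then there exists a unique pair (φ, η), where η : F_N → ℂ^d is a map with η(gh) = η(g) + η(h) for all g, h ∈ F_N, and φ : F_N → ℂ is a map satisfying: (a) η(g_i) = v_i for all i; (b) φ(e) = 0 and φ(g⁻¹) = conj(φ(g)) for all g ∈ F_N; (c) φ(gh) − φ(g) − φ(h) = ⟨η(g⁻¹), η(h)⟩ for all g, h ∈ F_N; (d) φ(g_i) = i·ν_i − (1/2)‖v_i‖² for all i. Moreover, this φ is conditionally positive definite: for every finitely supported function c : F_N → ℂ with Σ_g c(g) = 0, the number Σ_{g,h} conj(c(g)) · c(h) · φ(g⁻¹h) is real and nonnegative. -/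

import Mathlib

open scoped ComplexOrder InnerProductSpace

/-- The defining conditions of the Gaussian pair `(φ, η)` on the free group `F_N`
determined by vectors `v₁, …, v_N ∈ ℂ^d` and real numbers `ν₁, …, ν_N`. -/
def FreeGaussianPair {N d : ℕ} (v : Fin N → EuclideanSpace ℂ (Fin d))
    (ν : Fin N → ℝ) (φ : FreeGroup (Fin N) → ℂ)
    (η : FreeGroup (Fin N) → EuclideanSpace ℂ (Fin d)) : Prop :=
  (∀ g h : FreeGroup (Fin N), η (g * h) = η g + η h) ∧
  (∀ i : Fin N, η (FreeGroup.of i) = v i) ∧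
  φ 1 = 0 ∧
  (∀ g : FreeGroup (Fin N), φ g⁻¹ = starRingEnd ℂ (φ g)) ∧
  (∀ g h : FreeGroup (Fin N), φ (g * h) - φ g - φ h = ⟪η g⁻¹, η h⟫_ℂ) ∧
  (∀ i : Fin N, φ (FreeGroup.of i) = Complex.I * (ν i : ℂ) - (1 / 2) * (‖v i‖ : ℂ) ^ 2)

noncomputable section

/-- A Heisenberg-type group on `ℂ × ℂ^d`. -/
@[ext] structure Heis (d : ℕ) where
  z : ℂ
  w : EuclideanSpace ℂ (Fin d)

namespace Heis

variable {d : ℕ}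

instance : Mul (Heis d) := ⟨fun p q => ⟨p.z + q.z - ⟪p.w, q.w⟫_ℂ, p.w + q.w⟩⟩
instance : One (Heis d) := ⟨⟨0, 0⟩⟩
instance : Inv (Heis d) := ⟨fun p => ⟨-p.z - ⟪p.w, p.w⟫_ℂ, -p.w⟩⟩

@[simp] lemma mul_z (p q : Heis d) : (p * q).z = p.z + q.z - ⟪p.w, q.w⟫_ℂ := rfl
@[simp] lemma mul_w (p q : Heis d) : (p * q).w = p.w + q.w := rfl
@[simp] lemma one_z : (1 : Heis d).z = 0 := rfl
@[simp] lemma one_w : (1 : Heis d).w = 0 := rfl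
@[simp] lemma inv_z (p : Heis d) : (p⁻¹).z = -p.z - ⟪p.w, p.w⟫_ℂ := rfl
@[simp] lemma inv_w (p : Heis d) : (p⁻¹).w = -p.w := rfl

instance : Group (Heis d) where
  mul_assoc p q r := by
    ext
    · simp [inner_add_left, inner_add_right]; ring
    · simp [add_assoc]
  one_mul p := by
    ext <;> simp
  mul_one p := by
    ext <;> simp
  inv_mul_cancel p := by
    ext
    · simp [inner_neg_left]; ring
    · simp

end Heis

variable {N d : ℕ}

/-- The canonical homomorphism from the free group to the Heisenberg group. -/
def HeisHom (v : Fin N → EuclideanSpace ℂ (Fin d)) (ν : Fin N → ℝ) :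
    FreeGroup (Fin N) →* Heis d :=
  FreeGroup.lift fun i => ⟨Complex.I * (ν i : ℂ) - (1 / 2) * (‖v i‖ : ℂ) ^ 2, v i⟩

lemma HeisHom_conj (v : Fin N → EuclideanSpace ℂ (Fin d)) (ν : Fin N → ℝ)
    (g : FreeGroup (Fin N)) :
    starRingEnd ℂ ((HeisHom v ν g).z) =
      -(HeisHom v ν g).z - ⟪(HeisHom v ν g).w, (HeisHom v ν g).w⟫_ℂ := by
  induction g using FreeGroup.induction_on with
  | C1 => simp
  | of i =>
      have h1 : (HeisHom v ν (FreeGroup.of i)) =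
          ⟨Complex.I * (ν i : ℂ) - (1 / 2) * (‖v i‖ : ℂ) ^ 2, v i⟩ :=
        FreeGroup.lift_apply_of
      rw [h1]
      have hvv : ⟪v i, v i⟫_ℂ = ((‖v i‖ : ℂ)) ^ 2 := inner_self_eq_norm_sq_to_K (v i)
      show starRingEnd ℂ (Complex.I * (ν i : ℂ) - (1 / 2) * (‖v i‖ : ℂ) ^ 2) =
        -(Complex.I * (ν i : ℂ) - (1 / 2) * (‖v i‖ : ℂ) ^ 2) - ⟪v i, v i⟫_ℂ
      rw [hvv]
      simp only [map_sub, map_mul, Complex.conj_I, Complex.conj_ofReal, map_pow,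
        map_ofNat, map_one, map_div₀]
      ring
  | inv_of i ih =>
      rw [map_inv, Heis.inv_z, Heis.inv_w, map_sub, map_neg, ih, inner_neg_neg,
        inner_conj_symm]
  | mul x y ihx ihy =>
      rw [map_mul, Heis.mul_z, Heis.mul_w, map_sub, map_add, ihx, ihy,
        inner_conj_symm, inner_add_add_self]
      ring

/-- The constructed pair satisfies the Gaussian pair conditions. -/
lemma HeisHom_pair (v : Fin N → EuclideanSpace ℂ (Fin d)) (ν : Fin N → ℝ) :
    FreeGaussianPair v ν (fun g => (HeisHom v ν g).z) (fun g => (HeisHom v ν g).w) := by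
  have hof : ∀ i, HeisHom v ν (FreeGroup.of i) =
      ⟨Complex.I * (ν i : ℂ) - (1 / 2) * (‖v i‖ : ℂ) ^ 2, v i⟩ :=
    fun i => FreeGroup.lift_apply_of
  refine ⟨fun g h => ?_, fun i => ?_, ?_, fun g => ?_, fun g h => ?_, fun i => ?_⟩
  · show (HeisHom v ν (g * h)).w = (HeisHom v ν g).w + (HeisHom v ν h).w
    rw [map_mul, Heis.mul_w]
  · show (HeisHom v ν (FreeGroup.of i)).w = v i
    rw [hof]
  · show (HeisHom v ν 1).z = 0
    rw [map_one, Heis.one_z]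
  · show (HeisHom v ν g⁻¹).z = starRingEnd ℂ ((HeisHom v ν g).z)
    rw [map_inv, Heis.inv_z, HeisHom_conj]
  · show (HeisHom v ν (g * h)).z - (HeisHom v ν g).z - (HeisHom v ν h).z =
      ⟪(HeisHom v ν g⁻¹).w, (HeisHom v ν h).w⟫_ℂ
    rw [map_mul, map_inv, Heis.mul_z, Heis.inv_w, inner_neg_left]
    ring
  · show (HeisHom v ν (FreeGroup.of i)).z =
      Complex.I * (ν i : ℂ) - (1 / 2) * (‖v i‖ : ℂ) ^ 2
    rw [hof]

theorem stmt_15 {N d : ℕ} (hN : 1 ≤ N) (hd : 1 ≤ d)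
    (v : Fin N → EuclideanSpace ℂ (Fin d)) (ν : Fin N → ℝ) :
    (∃! p : (FreeGroup (Fin N) → ℂ) × (FreeGroup (Fin N) → EuclideanSpace ℂ (Fin d)),
      FreeGaussianPair v ν p.1 p.2) ∧
    (∀ (φ : FreeGroup (Fin N) → ℂ)
        (η : FreeGroup (Fin N) → EuclideanSpace ℂ (Fin d)),
      FreeGaussianPair v ν φ η →
      ∀ c : FreeGroup (Fin N) →₀ ℂ, (∑ g ∈ c.support, c g) = 0 →
        0 ≤ ∑ g ∈ c.support, ∑ h ∈ c.support,
          starRingEnd ℂ (c g) * c h * φ (g⁻¹ * h)) := by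
  constructor
  · -- existence and uniqueness
    refine ⟨(fun g => (HeisHom v ν g).z, fun g => (HeisHom v ν g).w),
      HeisHom_pair v ν, ?_⟩
    rintro ⟨φ, η⟩ ⟨h1, h2, h3, h4, h5, h6⟩
    dsimp only at h1 h2 h3 h4 h5 h6
    -- first η agrees
    have hη1 : η 1 = 0 := by
      have h := h1 1 1
      rw [one_mul] at h
      exact left_eq_add.mp h
    have hηinv : ∀ g, η g⁻¹ = -η g := by
      intro g
      have h := h1 g⁻¹ g
      rw [inv_mul_cancel, hη1] at h
      exact eq_neg_of_add_eq_zero_left h.symm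
    have hη : η = fun g => (HeisHom v ν g).w := by
      funext g
      induction g using FreeGroup.induction_on with
      | C1 => simp [hη1]
      | of i =>
          have h0 : (HeisHom v ν (FreeGroup.of i)) =
              ⟨Complex.I * (ν i : ℂ) - (1 / 2) * (‖v i‖ : ℂ) ^ 2, v i⟩ :=
            FreeGroup.lift_apply_of
          show η (FreeGroup.of i) = (HeisHom v ν (FreeGroup.of i)).w
          rw [h2, h0]
      | inv_of i ih => rw [hηinv, ih, map_inv, Heis.inv_w]
      | mul x y ihx ihy => rw [h1, ihx, ihy, map_mul, Heis.mul_w]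
    have hφ : φ = fun g => (HeisHom v ν g).z := by
      funext g
      induction g using FreeGroup.induction_on with
      | C1 => simp [h3]
      | of i =>
          have h0 : (HeisHom v ν (FreeGroup.of i)) =
              ⟨Complex.I * (ν i : ℂ) - (1 / 2) * (‖v i‖ : ℂ) ^ 2, v i⟩ :=
            FreeGroup.lift_apply_of
          show φ (FreeGroup.of i) = (HeisHom v ν (FreeGroup.of i)).z
          rw [h6, h0]
      | inv_of i ih =>
          rw [h4, ih, map_inv, Heis.inv_z, HeisHom_conj]
      | mul x y ihx ihy =>
          have h := h5 x y
          have : φ (x * y) = φ x + φ y + ⟪η x⁻¹, η y⟫_ℂ := by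
            rw [← h]; ring
          rw [this, ihx, ihy, hηinv, hη, map_mul, Heis.mul_z, inner_neg_left]
          ring
    rw [Prod.ext_iff]
    exact ⟨hφ, hη⟩
  · -- conditional positive definiteness
    rintro φ η ⟨h1, h2, h3, h4, h5, h6⟩ c hc
    have hη1 : η 1 = 0 := by
      have h := h1 1 1
      rw [one_mul] at h
      exact left_eq_add.mp h
    have hηinv : ∀ g, η g⁻¹ = -η g := by
      intro g
      have h := h1 g⁻¹ g
      rw [inv_mul_cancel, hη1] at h
      exact eq_neg_of_add_eq_zero_left h.symm
    have key : ∀ g h : FreeGroup (Fin N),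
        φ (g⁻¹ * h) = starRingEnd ℂ (φ g) + φ h + ⟪η g, η h⟫_ℂ := by
      intro g h
      have h' := h5 g⁻¹ h
      rw [inv_inv, h4] at h'
      linear_combination h'
    set s := c.support
    set w : EuclideanSpace ℂ (Fin d) := ∑ g ∈ s, c g • η g with hw
    have hsplit : ∑ g ∈ s, ∑ h ∈ s, starRingEnd ℂ (c g) * c h * φ (g⁻¹ * h) =
        ⟪w, w⟫_ℂ := by
      have hinner : ⟪w, w⟫_ℂ = ∑ g ∈ s, ∑ h ∈ s,
          starRingEnd ℂ (c g) * c h * ⟪η g, η h⟫_ℂ := by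
        rw [hw, sum_inner]
        refine Finset.sum_congr rfl fun g _ => ?_
        rw [inner_smul_left, inner_sum, Finset.mul_sum]
        refine Finset.sum_congr rfl fun h _ => ?_
        rw [inner_smul_right]; ring
      have e1 : ∀ g : FreeGroup (Fin N),
          ∑ h ∈ s, starRingEnd ℂ (c g) * c h * starRingEnd ℂ (φ g) = 0 := by
        intro g
        have : ∑ h ∈ s, starRingEnd ℂ (c g) * c h * starRingEnd ℂ (φ g) =
            (∑ h ∈ s, c h) * (starRingEnd ℂ (c g) * starRingEnd ℂ (φ g)) := by
          rw [Finset.sum_mul]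
          exact Finset.sum_congr rfl fun h _ => by ring
        rw [this, hc, zero_mul]
      have e2 : ∑ g ∈ s, ∑ h ∈ s, starRingEnd ℂ (c g) * c h * φ h = 0 := by
        have : ∑ g ∈ s, ∑ h ∈ s, starRingEnd ℂ (c g) * c h * φ h =
            (∑ g ∈ s, starRingEnd ℂ (c g)) * (∑ h ∈ s, c h * φ h) := by
          rw [Finset.sum_mul]
          refine Finset.sum_congr rfl fun g _ => ?_
          rw [Finset.mul_sum]
          exact Finset.sum_congr rfl fun h _ => by ring
        rw [this]
        have : (∑ g ∈ s, starRingEnd ℂ (c g)) = 0 := by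
          rw [← map_sum, hc, map_zero]
        rw [this, zero_mul]
      calc ∑ g ∈ s, ∑ h ∈ s, starRingEnd ℂ (c g) * c h * φ (g⁻¹ * h)
          = ∑ g ∈ s, ∑ h ∈ s, (starRingEnd ℂ (c g) * c h * starRingEnd ℂ (φ g)
              + starRingEnd ℂ (c g) * c h * φ h
              + starRingEnd ℂ (c g) * c h * ⟪η g, η h⟫_ℂ) := by
            refine Finset.sum_congr rfl fun g _ => Finset.sum_congr rfl fun h _ => ?_
            rw [key g h]; ring
        _ = (∑ g ∈ s, ∑ h ∈ s, starRingEnd ℂ (c g) * c h * starRingEnd ℂ (φ g))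
              + (∑ g ∈ s, ∑ h ∈ s, starRingEnd ℂ (c g) * c h * φ h)
              + ∑ g ∈ s, ∑ h ∈ s, starRingEnd ℂ (c g) * c h * ⟪η g, η h⟫_ℂ := by
            simp [Finset.sum_add_distrib]
        _ = ⟪w, w⟫_ℂ := by
            rw [hinner, e2]
            have : ∑ g ∈ s, ∑ h ∈ s,
                starRingEnd ℂ (c g) * c h * starRingEnd ℂ (φ g) = 0 := by
              simp [e1]
            rw [this]; ring
    rw [hsplit, inner_self_eq_norm_sq_to_K]
    norm_cast
    positivity
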